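/- In golden games (Bernoulli parameter p = φ) the starting player wins with probability exactly the golden ratio: for every n ∈ ℕ, μ_{2n,φ}({a : V_{2n}(a) = true}) = φ and μ_{2n+1,φ}({a : V_{2n+1}(a) = false}) = φ. -/
import Mathlib


open Filter Topology

/-- The golden ratio `φ = (√5 − 1)/2`. -/
noncomputable def phi : ℝ := (Real.sqrt 5 - 1) / 2

/-- Backward-induction value of the win-lose game of depth `n` on the complete binary tree:
`V_0(a) = a 0`; for `n ≥ 1`, the value is the `AND` of the values of the two depth-`(n−1)`
subtrees if `n` is odd (Player 2, the minimizer, moves) and the `OR` if `n` is even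
(Player 1, the maximizer, moves).  Player 2 moves last. -/
def gameValue : (n : ℕ) → (Fin (2 ^ n) → Bool) → Bool
  | 0, a => a 0
  | n + 1, a =>
      have h : 2 ^ (n + 1) = 2 ^ n + 2 ^ n := by rw [pow_succ]; omega
      let aL : Fin (2 ^ n) → Bool := fun i => a ⟨i.1, by have := i.2; omega⟩
      let aR : Fin (2 ^ n) → Bool := fun i => a ⟨i.1 + 2 ^ n, by have := i.2; omega⟩
      if (n + 1) % 2 = 1 then gameValue n aL && gameValue n aR
      else gameValue n aL || gameValue n aR

/-- `μ_{n,p}(S)`: the probability of a set `S` of depth-`n` games when the `2^n` payoffs are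
i.i.d. Bernoulli, each `true` with probability `p`. -/
noncomputable def prob (n : ℕ) (p : ℝ) (S : Set (Fin (2 ^ n) → Bool)) : ℝ :=
  ∑ a : Fin (2 ^ n) → Bool, S.indicator (fun a => ∏ i, if a i then p else 1 - p) a

/-! ### auxiliary development -/

open scoped Classical

private lemma pow_succ_split (n : ℕ) : 2 ^ (n + 1) = 2 ^ n + 2 ^ n := by
  rw [pow_succ]; omega

def splitL (n : ℕ) (a : Fin (2 ^ (n + 1)) → Bool) : Fin (2 ^ n) → Bool :=
  fun i => a ⟨i.1, by have := i.2; have := pow_succ_split n; omega⟩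

def splitR (n : ℕ) (a : Fin (2 ^ (n + 1)) → Bool) : Fin (2 ^ n) → Bool :=
  fun i => a ⟨i.1 + 2 ^ n, by have := i.2; have := pow_succ_split n; omega⟩

lemma gameValue_succ (n : ℕ) (a : Fin (2 ^ (n + 1)) → Bool) :
    gameValue (n + 1) a =
      if (n + 1) % 2 = 1 then gameValue n (splitL n a) && gameValue n (splitR n a)
      else gameValue n (splitL n a) || gameValue n (splitR n a) := rfl

noncomputable def wt (n : ℕ) (p : ℝ) (a : Fin (2 ^ n) → Bool) : ℝ :=
  ∏ i, if a i then p else 1 - p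

lemma prob_eq (n : ℕ) (p : ℝ) (S : Set (Fin (2 ^ n) → Bool)) :
    prob n p S = ∑ a : Fin (2 ^ n) → Bool, if a ∈ S then wt n p a else 0 := by
  unfold prob wt
  simp [Set.indicator_apply]

lemma wt_split (n : ℕ) (p : ℝ) (a : Fin (2 ^ (n + 1)) → Bool) :
    wt (n + 1) p a = wt n p (splitL n a) * wt n p (splitR n a) := by
  unfold wt splitL splitR
  have h := pow_succ_split n
  have e1 : (∏ i : Fin (2 ^ (n + 1)), if a i then p else 1 - p)
      = ∏ j : Fin (2 ^ n + 2 ^ n), if a (finCongr h.symm j) then p else 1 - p :=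
    Fintype.prod_equiv (finCongr h) _ _ (fun i => by simp)
  rw [e1, Fin.prod_univ_add]
  refine congrArg₂ (· * ·) (Finset.prod_congr rfl fun i _ => ?_)
    (Finset.prod_congr rfl fun i _ => ?_)
  · have hc : a (finCongr h.symm (Fin.castAdd (2 ^ n) i))
        = a ⟨i.1, by have := i.2; have := pow_succ_split n; omega⟩ :=
      congrArg a (Fin.ext (by simp))
    rw [hc]
  · have hc : a (finCongr h.symm (Fin.natAdd (2 ^ n) i))
        = a ⟨i.1 + 2 ^ n, by have := i.2; have := pow_succ_split n; omega⟩ :=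
      congrArg a (Fin.ext
        (by simp only [finCongr_apply, Fin.coe_cast, Fin.coe_natAdd]; omega))
    rw [hc]

/-- Glue two halves together. -/
def glue (n : ℕ) (pr : (Fin (2 ^ n) → Bool) × (Fin (2 ^ n) → Bool)) :
    Fin (2 ^ (n + 1)) → Bool :=
  fun i => if h : i.1 < 2 ^ n then pr.1 ⟨i.1, h⟩
    else pr.2 ⟨i.1 - 2 ^ n, by have := i.2; have := pow_succ_split n; omega⟩

noncomputable def splitEquiv (n : ℕ) :
    (Fin (2 ^ (n + 1)) → Bool) ≃ ((Fin (2 ^ n) → Bool) × (Fin (2 ^ n) → Bool)) where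
  toFun a := (splitL n a, splitR n a)
  invFun := glue n
  left_inv a := by
    funext i
    unfold glue splitL splitR
    by_cases h : i.1 < 2 ^ n
    · rw [dif_pos h]
    · rw [dif_neg h]
      exact congrArg a (Fin.ext (by simp; omega))
  right_inv pr := by
    have hL : splitL n (glue n pr) = pr.1 := by
      funext i
      unfold glue splitL
      dsimp only
      rw [dif_pos (show (i : ℕ) < 2 ^ n from i.2)]
    have hR : splitR n (glue n pr) = pr.2 := by
      funext i
      unfold glue splitR
      dsimp only
      rw [dif_neg (show ¬ ((i : ℕ) + 2 ^ n < 2 ^ n) from by omega)]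
      exact congrArg pr.2 (Fin.ext (by simp))
    dsimp only
    rw [hL, hR]

lemma prob_split (n : ℕ) (p : ℝ) (S T : Set (Fin (2 ^ n) → Bool)) :
    prob (n + 1) p {a | splitL n a ∈ S ∧ splitR n a ∈ T} = prob n p S * prob n p T := by
  rw [prob_eq, prob_eq, prob_eq]
  rw [← Equiv.sum_comp (splitEquiv n).symm, Fintype.sum_prod_type, Finset.sum_mul_sum]
  refine Finset.sum_congr rfl (fun x _ => Finset.sum_congr rfl (fun y _ => ?_))
  have hxy : splitEquiv n ((splitEquiv n).symm (x, y)) = (x, y) :=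
    (splitEquiv n).apply_symm_apply _
  have hL : splitL n ((splitEquiv n).symm (x, y)) = x := congrArg Prod.fst hxy
  have hR : splitR n ((splitEquiv n).symm (x, y)) = y := congrArg Prod.snd hxy
  have hw : wt (n + 1) p ((splitEquiv n).symm (x, y)) = wt n p x * wt n p y := by
    rw [wt_split, hL, hR]
  simp only [Set.mem_setOf_eq, hL, hR, hw]
  by_cases h1 : x ∈ S <;> by_cases h2 : y ∈ T <;> simp [h1, h2]

instance : Unique (Fin (2 ^ 0)) :=
  ⟨⟨⟨0, by norm_num⟩⟩, fun a => Fin.ext (by have := a.2; omega)⟩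

lemma sum_fn_zero (f : (Fin (2 ^ 0) → Bool) → ℝ) :
    ∑ a, f a = f (fun _ => true) + f (fun _ => false) := by
  rw [← Equiv.sum_comp (Equiv.funUnique (Fin (2 ^ 0)) Bool).symm f, Fintype.sum_bool]
  rfl

lemma wt_zero (p : ℝ) (a : Fin (2 ^ 0) → Bool) :
    wt 0 p a = if a default then p else 1 - p := by
  unfold wt
  rw [Fintype.prod_unique]

lemma prob_zero_univ (p : ℝ) : prob 0 p (Set.univ : Set (Fin (2 ^ 0) → Bool)) = 1 := by
  rw [prob_eq, sum_fn_zero]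
  simp [wt_zero]

lemma prob_univ (n : ℕ) (p : ℝ) : prob n p (Set.univ : Set (Fin (2 ^ n) → Bool)) = 1 := by
  induction n with
  | zero => exact prob_zero_univ p
  | succ m ih =>
    have hs : (Set.univ : Set (Fin (2 ^ (m + 1)) → Bool)) =
        {a | splitL m a ∈ (Set.univ : Set (Fin (2 ^ m) → Bool)) ∧
          splitR m a ∈ (Set.univ : Set (Fin (2 ^ m) → Bool))} := by
      ext a; simp
    rw [hs, prob_split, ih]
    ring

lemma prob_compl (n : ℕ) (p : ℝ) (S : Set (Fin (2 ^ n) → Bool)) :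
    prob n p Sᶜ = 1 - prob n p S := by
  have h : prob n p S + prob n p Sᶜ = prob n p Set.univ := by
    rw [prob_eq, prob_eq, prob_eq, ← Finset.sum_add_distrib]
    refine Fintype.sum_congr _ _ (fun a => ?_)
    by_cases h : a ∈ S <;> simp [h]
  rw [prob_univ] at h
  linarith

lemma prob_zero_true (p : ℝ) : prob 0 p {a | gameValue 0 a = true} = p := by
  rw [prob_eq, sum_fn_zero]
  simp [wt_zero, gameValue]

lemma phi_sq : phi * phi = 1 - phi := by
  have h : Real.sqrt 5 ^ 2 = 5 := Real.sq_sqrt (by norm_num)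
  unfold phi
  nlinarith [h]

lemma step_odd (m : ℕ) (hm : m % 2 = 0)
    (h : prob m phi {a | gameValue m a = true} = phi) :
    prob (m + 1) phi {a | gameValue (m + 1) a = false} = phi := by
  have hpar : (m + 1) % 2 = 1 := by omega
  have hset : {a : Fin (2 ^ (m + 1)) → Bool | gameValue (m + 1) a = true} =
      {a | splitL m a ∈ {b | gameValue m b = true} ∧
        splitR m a ∈ {b | gameValue m b = true}} := by
    ext a
    simp [gameValue_succ, hpar]
  have htrue : prob (m + 1) phi {a | gameValue (m + 1) a = true} = phi * phi := by
    rw [hset, prob_split, h]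
  have hcompl : {a : Fin (2 ^ (m + 1)) → Bool | gameValue (m + 1) a = false} =
      {a : Fin (2 ^ (m + 1)) → Bool | gameValue (m + 1) a = true}ᶜ := by
    ext a; simp
  rw [hcompl, prob_compl, htrue, phi_sq]
  ring

lemma step_even (m : ℕ) (hm : m % 2 = 1)
    (h : prob m phi {a | gameValue m a = false} = phi) :
    prob (m + 1) phi {a | gameValue (m + 1) a = true} = phi := by
  have hpar : ¬ ((m + 1) % 2 = 1) := by omega
  have hset : {a : Fin (2 ^ (m + 1)) → Bool | gameValue (m + 1) a = false} =
      {a | splitL m a ∈ {b | gameValue m b = false} ∧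
        splitR m a ∈ {b | gameValue m b = false}} := by
    ext a
    simp [gameValue_succ, hpar]
  have hfalse : prob (m + 1) phi {a | gameValue (m + 1) a = false} = phi * phi := by
    rw [hset, prob_split, h]
  have hcompl : {a : Fin (2 ^ (m + 1)) → Bool | gameValue (m + 1) a = true} =
      {a : Fin (2 ^ (m + 1)) → Bool | gameValue (m + 1) a = false}ᶜ := by
    ext a; simp
  rw [hcompl, prob_compl, hfalse, phi_sq]
  ring

/-- In golden games the starting player wins with probability exactly `φ`: for every `n`,
`μ_{2n,φ}({V_{2n} = true}) = φ` and `μ_{2n+1,φ}({V_{2n+1} = false}) = φ`. -/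
theorem golden_game_starting_player_wins (n : ℕ) :
    prob (2 * n) phi {a | gameValue (2 * n) a = true} = phi ∧
    prob (2 * n + 1) phi {a | gameValue (2 * n + 1) a = false} = phi := by
  induction n with
  | zero =>
    constructor
    · exact prob_zero_true phi
    · exact step_odd 0 (by norm_num) (prob_zero_true phi)
  | succ k ih =>
    have h1 : prob (2 * k + 1 + 1) phi {a | gameValue (2 * k + 1 + 1) a = true} = phi :=
      step_even (2 * k + 1) (by omega) ih.2
    have h2 : prob (2 * k + 1 + 1 + 1) phi
        {a | gameValue (2 * k + 1 + 1 + 1) a = false} = phi :=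
      step_odd (2 * k + 1 + 1) (by omega) h1
    constructor
    · rw [show 2 * (k + 1) = 2 * k + 1 + 1 from by ring]
      exact h1
    · rw [show 2 * (k + 1) + 1 = 2 * k + 1 + 1 + 1 from by ring]
      exact h2
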